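/- Let G have a positive-negative spanning tree T and suppose every bipartition (V₁,V₂) of nodes has a balancing set whose weight matrices have trivially intersecting null space (no non-trivial balancing set exists). Then the null space of the matrix-valued Laplacian L is trivial: null(L) = {0}, so the dynamics ẋ = −Lx converges to the origin for all initial conditions. -/

import Mathlib

set_option linter.unusedVariables false
set_option linter.unnecessarySeqFocus false

open Matrix in
lemma aux_quad_nonneg {d : ℕ} {M : Matrix (Fin d) (Fin d) ℝ} (h : M.PosSemidef)
    (v : Fin d → ℝ) : 0 ≤ v ⬝ᵥ M *ᵥ v := by
  simpa using h.dotProduct_mulVec_nonneg v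

open Matrix in
lemma aux_quad_zero {d : ℕ} {M : Matrix (Fin d) (Fin d) ℝ} (h : M.PosSemidef)
    (v : Fin d → ℝ) (hv : v ⬝ᵥ M *ᵥ v = 0) : M *ᵥ v = 0 := by
  exact (h.dotProduct_mulVec_zero_iff v).mp (by simpa using hv)

open Matrix in
lemma aux_psd_neg_psd {d : ℕ} {M : Matrix (Fin d) (Fin d) ℝ} (h1 : M.PosSemidef)
    (h2 : (-M).PosSemidef) : M = 0 := by
  have hv : ∀ v : Fin d → ℝ, M *ᵥ v = 0 := by
    intro v
    refine aux_quad_zero h1 v (le_antisymm ?_ (aux_quad_nonneg h1 v))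
    have := aux_quad_nonneg h2 v
    simp only [Matrix.neg_mulVec, dotProduct_neg] at this
    linarith
  ext i j
  have := congrFun (hv (Pi.single j 1)) i
  simpa [Matrix.mulVec_single] using this

open Matrix in
lemma aux_symm_dot {d : ℕ} {M : Matrix (Fin d) (Fin d) ℝ} (hM : Mᵀ = M)
    (u v : Fin d → ℝ) : u ⬝ᵥ M *ᵥ v = v ⬝ᵥ M *ᵥ u := by
  rw [Matrix.dotProduct_mulVec, ← Matrix.mulVec_transpose, hM, dotProduct_comm]

open Matrix in
lemma aux_posdef_zero {d : ℕ} {M : Matrix (Fin d) (Fin d) ℝ}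
    (h : M.PosDef ∨ (-M).PosDef) (v : Fin d → ℝ) (hv : M *ᵥ v = 0) : v = 0 := by
  by_contra hne
  rcases h with h | h
  · have := h.dotProduct_mulVec_pos hne
    simp [hv] at this
  · have := h.dotProduct_mulVec_pos hne
    simp [Matrix.neg_mulVec, hv] at this

open Matrix in
lemma aux_expand {n d : ℕ}
    (E : Fin n → Fin n → Prop) (hEirr : ∀ i, ¬ E i i)
    (A : Fin n → Fin n → Matrix (Fin d) (Fin d) ℝ)
    (hA0 : ∀ i j, ¬ E i j → A i j = 0)
    (s : Fin n → Fin n → ℝ)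
    (L : Matrix (Fin n × Fin d) (Fin n × Fin d) ℝ)
    (hL : L = Matrix.of fun p q =>
      if p.1 = q.1 then (∑ k, s p.1 k • A p.1 k) p.2 q.2 else -(A p.1 q.1 p.2 q.2))
    (x : Fin n × Fin d → ℝ) :
    x ⬝ᵥ L *ᵥ x = ∑ i, ∑ k, (s i k * ((fun a => x (i,a)) ⬝ᵥ (A i k) *ᵥ (fun a => x (i,a)))
      - (fun a => x (i,a)) ⬝ᵥ (A i k) *ᵥ (fun a => x (k,a))) := by
  have hAii : ∀ i, A i i = 0 := fun i => hA0 i i (hEirr i)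
  have hLv : ∀ (i j : Fin n) (a b : Fin d),
      L (i,a) (j,b) = (if i = j then ∑ k, s i k * A i k a b else 0) - A i j a b := by
    intro i j a b
    rw [hL]
    by_cases h : i = j
    · subst h
      simp [Matrix.sum_apply, hAii]
    · simp [h]
  calc x ⬝ᵥ L *ᵥ x
      = ∑ i, ∑ a, ∑ j, ∑ b, x (i,a) * (L (i,a) (j,b) * x (j,b)) := by
        simp [dotProduct, Matrix.mulVec, Fintype.sum_prod_type, Finset.mul_sum]
    _ = ∑ i, ∑ a, ∑ j, ∑ b, ((if i = j then x (i,a) * ((∑ k, s i k * A i k a b) * x (j,b)) else 0)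
          - x (i,a) * (A i j a b * x (j,b))) := by
        refine Finset.sum_congr rfl fun i _ => Finset.sum_congr rfl fun a _ =>
          Finset.sum_congr rfl fun j _ => Finset.sum_congr rfl fun b _ => ?_
        rw [hLv]
        by_cases h : i = j <;> simp [h] <;> ring
    _ = (∑ i, ∑ a, ∑ b, x (i,a) * ((∑ k, s i k * A i k a b) * x (i,b)))
          - ∑ i, ∑ j, ∑ a, ∑ b, x (i,a) * (A i j a b * x (j,b)) := by
        simp only [Finset.sum_sub_distrib]
        congr 1
        · refine Finset.sum_congr rfl fun i _ => Finset.sum_congr rfl fun a _ => ?_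
          rw [Finset.sum_comm]
          simp
        · refine Finset.sum_congr rfl fun i _ => ?_
          rw [Finset.sum_comm]
    _ = ∑ i, ∑ k, (s i k * ((fun a => x (i,a)) ⬝ᵥ (A i k) *ᵥ (fun a => x (i,a)))
          - (fun a => x (i,a)) ⬝ᵥ (A i k) *ᵥ (fun a => x (k,a))) := by
        simp only [Finset.sum_sub_distrib]
        congr 1
        · refine Finset.sum_congr rfl fun i _ => ?_
          calc (∑ a, ∑ b, x (i,a) * ((∑ k, s i k * A i k a b) * x (i,b)))
              = ∑ a, ∑ b, ∑ k, x (i,a) * (s i k * (A i k a b * x (i,b))) := by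
                refine Finset.sum_congr rfl fun a _ => Finset.sum_congr rfl fun b _ => ?_
                rw [Finset.sum_mul, Finset.mul_sum]
                exact Finset.sum_congr rfl fun k _ => by ring
            _ = ∑ a, ∑ k, ∑ b, x (i,a) * (s i k * (A i k a b * x (i,b))) :=
                Finset.sum_congr rfl fun a _ => Finset.sum_comm
            _ = ∑ k, ∑ a, ∑ b, x (i,a) * (s i k * (A i k a b * x (i,b))) :=
                Finset.sum_comm
            _ = ∑ k, s i k * ((fun a => x (i,a)) ⬝ᵥ (A i k) *ᵥ (fun a => x (i,a))) := by
                refine Finset.sum_congr rfl fun k _ => ?_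
                simp only [dotProduct, Matrix.mulVec, Finset.mul_sum]
                refine Finset.sum_congr rfl fun a _ => Finset.sum_congr rfl fun b _ => by ring
        · refine Finset.sum_congr rfl fun i _ => Finset.sum_congr rfl fun k _ => ?_
          simp only [dotProduct, Matrix.mulVec, Finset.mul_sum]

open Matrix in
lemma aux_symm_dot' {d : ℕ} {M : Matrix (Fin d) (Fin d) ℝ} (hM : Mᵀ = M)
    (u v : Fin d → ℝ) : u ⬝ᵥ M *ᵥ v = v ⬝ᵥ M *ᵥ u := by
  rw [Matrix.dotProduct_mulVec, ← Matrix.mulVec_transpose, hM, dotProduct_comm]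

open Matrix in
lemma aux_pair {n d : ℕ}
    (E : Fin n → Fin n → Prop)
    (hEsymm : ∀ i j, E i j → E j i)
    (A : Fin n → Fin n → Matrix (Fin d) (Fin d) ℝ)
    (hAsymm : ∀ i j, A i j = A j i)
    (hA0 : ∀ i j, ¬ E i j → A i j = 0)
    (s : Fin n → Fin n → ℝ) (hssymm : ∀ i j, s i j = s j i)
    (hs : ∀ i j, E i j →
      (s i j = 1 ∧ (A i j).PosSemidef) ∨ (s i j = -1 ∧ (-(A i j)).PosSemidef))
    (x : Fin n × Fin d → ℝ) (i k : Fin n) :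
    (s i k * ((fun a => x (i,a)) ⬝ᵥ (A i k) *ᵥ (fun a => x (i,a)))
      - (fun a => x (i,a)) ⬝ᵥ (A i k) *ᵥ (fun a => x (k,a)))
    + (s k i * ((fun a => x (k,a)) ⬝ᵥ (A k i) *ᵥ (fun a => x (k,a)))
      - (fun a => x (k,a)) ⬝ᵥ (A k i) *ᵥ (fun a => x (i,a)))
    = ((fun a => x (i,a)) - s i k • (fun a => x (k,a))) ⬝ᵥ
        (s i k • A i k) *ᵥ ((fun a => x (i,a)) - s i k • (fun a => x (k,a))) := by
  set u : Fin d → ℝ := fun a => x (i,a) with hu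
  set v : Fin d → ℝ := fun a => x (k,a) with hv
  by_cases hE : E i k
  · have hB : (A i k)ᵀ = A i k := by
      rcases hs i k hE with ⟨_, hp⟩ | ⟨_, hp⟩
      · have := hp.1
        rwa [Matrix.IsHermitian, Matrix.conjTranspose_eq_transpose_of_trivial] at this
      · have := hp.1
        rw [Matrix.IsHermitian, Matrix.conjTranspose_eq_transpose_of_trivial,
          Matrix.transpose_neg] at this
        exact neg_inj.mp this
    have hAki : A k i = A i k := (hAsymm i k).symm
    have hski : s k i = s i k := (hssymm i k).symm
    have hdsym := aux_symm_dot' hB u v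
    rcases hs i k hE with ⟨h1, _⟩ | ⟨h1, _⟩ <;>
      simp only [hAki, hski, h1, one_smul, neg_one_smul, Matrix.smul_mulVec,
        Matrix.mulVec_sub, sub_dotProduct, dotProduct_sub,
        dotProduct_smul, smul_dotProduct, Matrix.neg_mulVec,
        dotProduct_neg, neg_dotProduct, Matrix.mulVec_neg,
        sub_neg_eq_add, Matrix.mulVec_add, add_dotProduct, dotProduct_add, smul_eq_mul, smul_neg, neg_neg, one_mul, neg_mul, one_smul] <;>
      rw [hdsym] <;> ring
  · have h1 : A i k = 0 := hA0 i k hE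
    have h2 : A k i = 0 := hA0 k i fun h => hE (hEsymm k i h)
    simp [h1, h2]

section
variable {n d : ℕ}
  (E : Fin n → Fin n → Prop)
  (A : Fin n → Fin n → Matrix (Fin d) (Fin d) ℝ)
  (s : Fin n → Fin n → ℝ)

open Matrix

lemma aux_sA_psd
    (hA0 : ∀ i j, ¬ E i j → A i j = 0)
    (hs : ∀ i j, E i j →
      (s i j = 1 ∧ (A i j).PosSemidef) ∨ (s i j = -1 ∧ (-(A i j)).PosSemidef))
    (i k : Fin n) : (s i k • A i k).PosSemidef := by
  by_cases hE : E i k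
  · rcases hs i k hE with ⟨h1, hp⟩ | ⟨h1, hp⟩
    · rw [h1, one_smul]; exact hp
    · rw [h1, neg_one_smul]; exact hp
  · rw [hA0 i k hE, smul_zero]
    exact Matrix.PosSemidef.zero

end

open Matrix in
lemma aux_decomp {n d : ℕ}
    (E : Fin n → Fin n → Prop)
    (hEsymm : ∀ i j, E i j → E j i) (hEirr : ∀ i, ¬ E i i)
    (A : Fin n → Fin n → Matrix (Fin d) (Fin d) ℝ)
    (hAsymm : ∀ i j, A i j = A j i)
    (hA0 : ∀ i j, ¬ E i j → A i j = 0)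
    (s : Fin n → Fin n → ℝ) (hssymm : ∀ i j, s i j = s j i)
    (hs : ∀ i j, E i j →
      (s i j = 1 ∧ (A i j).PosSemidef) ∨ (s i j = -1 ∧ (-(A i j)).PosSemidef))
    (L : Matrix (Fin n × Fin d) (Fin n × Fin d) ℝ)
    (hL : L = Matrix.of fun p q =>
      if p.1 = q.1 then (∑ k, s p.1 k • A p.1 k) p.2 q.2 else -(A p.1 q.1 p.2 q.2))
    (x : Fin n × Fin d → ℝ) :
    2 * (x ⬝ᵥ L *ᵥ x) = ∑ i, ∑ k,
      (((fun a => x (i,a)) - s i k • (fun a => x (k,a))) ⬝ᵥ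
        (s i k • A i k) *ᵥ ((fun a => x (i,a)) - s i k • (fun a => x (k,a)))) := by
  rw [aux_expand E hEirr A hA0 s L hL, two_mul]
  set Q : Fin n → Fin n → ℝ := fun i k =>
    (s i k * ((fun a => x (i,a)) ⬝ᵥ (A i k) *ᵥ (fun a => x (i,a)))
      - (fun a => x (i,a)) ⬝ᵥ (A i k) *ᵥ (fun a => x (k,a))) with hQ
  have hswap : (∑ i, ∑ k, Q i k) = ∑ i, ∑ k, Q k i := Finset.sum_comm
  calc (∑ i, ∑ k, Q i k) + (∑ i, ∑ k, Q i k)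
      = ∑ i, ∑ k, (Q i k + Q k i) := by
        rw [hswap]
        nth_rewrite 1 [← hswap]
        rw [← Finset.sum_add_distrib]
        exact Finset.sum_congr rfl fun i _ => (Finset.sum_add_distrib).symm
    _ = _ := Finset.sum_congr rfl fun i _ => Finset.sum_congr rfl fun k _ =>
        aux_pair E hEsymm A hAsymm hA0 s hssymm hs x i k

open Matrix in
lemma aux_nonneg {n d : ℕ}
    (E : Fin n → Fin n → Prop)
    (hEsymm : ∀ i j, E i j → E j i) (hEirr : ∀ i, ¬ E i i)
    (A : Fin n → Fin n → Matrix (Fin d) (Fin d) ℝ)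
    (hAsymm : ∀ i j, A i j = A j i)
    (hA0 : ∀ i j, ¬ E i j → A i j = 0)
    (s : Fin n → Fin n → ℝ) (hssymm : ∀ i j, s i j = s j i)
    (hs : ∀ i j, E i j →
      (s i j = 1 ∧ (A i j).PosSemidef) ∨ (s i j = -1 ∧ (-(A i j)).PosSemidef))
    (L : Matrix (Fin n × Fin d) (Fin n × Fin d) ℝ)
    (hL : L = Matrix.of fun p q =>
      if p.1 = q.1 then (∑ k, s p.1 k • A p.1 k) p.2 q.2 else -(A p.1 q.1 p.2 q.2))
    (x : Fin n × Fin d → ℝ) :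
    0 ≤ x ⬝ᵥ L *ᵥ x := by
  have h := aux_decomp E hEsymm hEirr A hAsymm hA0 s hssymm hs L hL x
  have hnn : 0 ≤ ∑ i, ∑ k : Fin n,
      (((fun a => x (i,a)) - s i k • (fun a => x (k,a))) ⬝ᵥ
        (s i k • A i k) *ᵥ ((fun a => x (i,a)) - s i k • (fun a => x (k,a)))) :=
    Finset.sum_nonneg fun i _ => Finset.sum_nonneg fun k _ =>
      aux_quad_nonneg (aux_sA_psd E A s hA0 hs i k) _
  linarith

open Matrix in
lemma aux_edge_kernel {n d : ℕ}
    (E : Fin n → Fin n → Prop)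
    (hEsymm : ∀ i j, E i j → E j i) (hEirr : ∀ i, ¬ E i i)
    (A : Fin n → Fin n → Matrix (Fin d) (Fin d) ℝ)
    (hAsymm : ∀ i j, A i j = A j i)
    (hA0 : ∀ i j, ¬ E i j → A i j = 0)
    (s : Fin n → Fin n → ℝ) (hssymm : ∀ i j, s i j = s j i)
    (hs : ∀ i j, E i j →
      (s i j = 1 ∧ (A i j).PosSemidef) ∨ (s i j = -1 ∧ (-(A i j)).PosSemidef))
    (L : Matrix (Fin n × Fin d) (Fin n × Fin d) ℝ)
    (hL : L = Matrix.of fun p q =>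
      if p.1 = q.1 then (∑ k, s p.1 k • A p.1 k) p.2 q.2 else -(A p.1 q.1 p.2 q.2))
    (x : Fin n × Fin d → ℝ) (hx : x ⬝ᵥ L *ᵥ x = 0) (i k : Fin n) (hE : E i k) :
    (A i k) *ᵥ ((fun a => x (i,a)) - s i k • (fun a => x (k,a))) = 0 := by
  have h := aux_decomp E hEsymm hEirr A hAsymm hA0 s hssymm hs L hL x
  rw [hx, mul_zero] at h
  have hterm : ∀ i ∈ Finset.univ, ∀ k ∈ Finset.univ,
      (((fun a => x (i,a)) - s i k • (fun a => x (k,a))) ⬝ᵥ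
        (s i k • A i k) *ᵥ ((fun a => x (i,a)) - s i k • (fun a => x (k,a)))) = 0 := by
    have := (Finset.sum_eq_zero_iff_of_nonneg (fun i _ =>
      Finset.sum_nonneg fun k _ =>
        aux_quad_nonneg (aux_sA_psd E A s hA0 hs i k) _)).mp h.symm
    intro i hi k hk
    exact (Finset.sum_eq_zero_iff_of_nonneg (fun k _ =>
      aux_quad_nonneg (aux_sA_psd E A s hA0 hs i k) _)).mp (this i hi) k hk
  have hz := aux_quad_zero (aux_sA_psd E A s hA0 hs i k) _
    (hterm i (Finset.mem_univ i) k (Finset.mem_univ k))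
  rw [Matrix.smul_mulVec] at hz
  rcases hs i k hE with ⟨h1, _⟩ | ⟨h1, _⟩ <;> rw [h1] at hz ⊢ <;> simpa using hz

open Matrix in
lemma aux_core {n d : ℕ} (hn : 0 < n)
    (E : Fin n → Fin n → Prop)
    (hEsymm : ∀ i j, E i j → E j i) (hEirr : ∀ i, ¬ E i i)
    (A : Fin n → Fin n → Matrix (Fin d) (Fin d) ℝ)
    (hAsymm : ∀ i j, A i j = A j i)
    (hA0 : ∀ i j, ¬ E i j → A i j = 0)
    (s : Fin n → Fin n → ℝ) (hssymm : ∀ i j, s i j = s j i)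
    (hs : ∀ i j, E i j →
      (s i j = 1 ∧ (A i j).PosSemidef) ∨ (s i j = -1 ∧ (-(A i j)).PosSemidef))
    (T : Fin n → Fin n → Prop)
    (hTsymm : ∀ i j, T i j → T j i) (hTE : ∀ i j, T i j → E i j)
    (hTdef : ∀ i j, T i j → (A i j).PosDef ∨ (-(A i j)).PosDef)
    (hTconn : ∀ p q : Fin n, Relation.ReflTransGen T p q)
    (L : Matrix (Fin n × Fin d) (Fin n × Fin d) ℝ)
    (hL : L = Matrix.of fun p q =>
      if p.1 = q.1 then (∑ k, s p.1 k • A p.1 k) p.2 q.2 else -(A p.1 q.1 p.2 q.2))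
    (hnoNBS : ∀ P : Fin n → Bool, ∀ ξ : Fin d → ℝ,
      (∀ l m, E l m →
        ((P l = P m ∧ (-(A l m)).PosSemidef) ∨ (P l ≠ P m ∧ (A l m).PosSemidef)) →
        (A l m).mulVec ξ = 0) → ξ = 0)
    (x : Fin n × Fin d → ℝ) (hx : x ⬝ᵥ L *ᵥ x = 0) : x = 0 := by
  set y : Fin n → Fin d → ℝ := fun i a => x (i, a) with hy
  have hedge : ∀ i k, E i k → (A i k) *ᵥ (y i - s i k • y k) = 0 :=
    fun i k hE => aux_edge_kernel E hEsymm hEirr A hAsymm hA0 s hssymm hs L hL x hx i k hE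
  have hsval : ∀ i k, E i k → s i k = 1 ∨ s i k = -1 := by
    intro i k hE
    rcases hs i k hE with ⟨h1, _⟩ | ⟨h1, _⟩
    · exact Or.inl h1
    · exact Or.inr h1
  set i0 : Fin n := ⟨0, hn⟩ with hi0
  have hsigma : ∀ i, ∃ ε : ℝ, (ε = 1 ∨ ε = -1) ∧ y i = ε • y i0 := by
    intro i
    have h := hTconn i0 i
    induction h with
    | refl => exact ⟨1, Or.inl rfl, (one_smul _ _).symm⟩
    | @tail b c hab hbc ih =>
      obtain ⟨ε, hεpm, hεb⟩ := ih
      have hE : E b c := hTE b c hbc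
      have hz : y b - s b c • y c = 0 :=
        aux_posdef_zero (hTdef b c hbc) _ (hedge b c hE)
      have hyb : y b = s b c • y c := by
        rw [sub_eq_zero] at hz; exact hz
      have hss : s b c * s b c = 1 := by
        rcases hsval b c hE with h | h <;> rw [h] <;> norm_num
      have hyc : y c = s b c • y b := by
        rw [hyb, smul_smul, hss, one_smul]
      refine ⟨s b c * ε, ?_, ?_⟩
      · rcases hsval b c hE with h | h <;> rcases hεpm with h' | h' <;>
          rw [h, h'] <;> norm_num
      · rw [hyc, hεb, smul_smul]
  choose ε hεpm hεy using hsigma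
  have hξ : y i0 = 0 := by
    refine hnoNBS (fun i => decide (ε i = 1)) (y i0) ?_
    intro l m hE hbal
    have hz := hedge l m hE
    have hcoef : ∀ c : ℝ, c ≠ 0 → (y l - s l m • y m) = c • (y i0) →
        (A l m) *ᵥ (y i0) = 0 := by
      intro c hc hzc
      rw [hzc, Matrix.mulVec_smul, smul_eq_zero] at hz
      exact hz.resolve_left hc
    have hzform : y l - s l m • y m = (ε l - s l m * ε m) • (y i0) := by
      rw [hεy l, hεy m, smul_smul, sub_smul]
    rcases hs l m hE with ⟨h1, hp⟩ | ⟨h1, hp⟩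
    · rcases hbal with ⟨hPeq, hnps⟩ | ⟨hPne, hps⟩
      · rw [aux_psd_neg_psd hp hnps, Matrix.zero_mulVec]
      · have hne : ε l ≠ ε m := by
          intro h
          exact hPne (by simp [h])
        refine hcoef (ε l - s l m * ε m) ?_ hzform
        rw [h1, one_mul]
        rcases hεpm l with h' | h' <;> rcases hεpm m with h'' | h'' <;>
          rw [h', h''] at hne ⊢ <;> norm_num at hne <;> norm_num
    · rcases hbal with ⟨hPeq, hnps⟩ | ⟨hPne, hps⟩
      · have heq : ε l = ε m := by
          rw [decide_eq_decide] at hPeq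
          rcases hεpm l with h' | h' <;> rcases hεpm m with h'' | h'' <;>
            rw [h', h''] at hPeq ⊢ <;> norm_num at hPeq <;> norm_num
        refine hcoef (ε l - s l m * ε m) ?_ hzform
        rw [h1, heq]
        rcases hεpm m with h'' | h'' <;> rw [h''] <;> norm_num
      · rw [aux_psd_neg_psd hps hp, Matrix.zero_mulVec]
  funext p
  have : x (p.1, p.2) = y p.1 p.2 := rfl
  rw [show p = (p.1, p.2) from rfl]
  rw [this, hεy p.1, hξ]
  simp

open Matrix Filter Real in
lemma aux_tendsto {ι : Type*} [Fintype ι] [Nonempty ι]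
    (L : Matrix ι ι ℝ)
    (hQnn : ∀ v : ι → ℝ, 0 ≤ v ⬝ᵥ L *ᵥ v)
    (hQ0 : ∀ v : ι → ℝ, v ⬝ᵥ L *ᵥ v = 0 → v = 0)
    (x : ℝ → ι → ℝ)
    (hx : ∀ t : ℝ, HasDerivAt x (-(L.mulVec (x t))) t) :
    Tendsto x atTop (nhds 0) := by
  classical
  set Q : (ι → ℝ) → ℝ := fun v => v ⬝ᵥ L *ᵥ v with hQdef
  have hQcont : Continuous Q := by
    apply continuous_finset_sum
    intro p _
    exact (continuous_apply p).mul
      (continuous_finset_sum _ fun q _ => continuous_const.mul (continuous_apply q))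
  -- minimum on the unit sphere
  obtain ⟨v0, hv0S, hvmin⟩ := (isCompact_sphere (0 : ι → ℝ) 1).exists_isMinOn
    (NormedSpace.sphere_nonempty.mpr zero_le_one) hQcont.continuousOn
  have hv0norm : ‖v0‖ = 1 := by simpa using mem_sphere_zero_iff_norm.mp hv0S
  have hv0ne : v0 ≠ 0 := by
    intro h; rw [h] at hv0norm; simp at hv0norm
  have hlampos : 0 < Q v0 := by
    rcases lt_or_eq_of_le (hQnn v0) with h | h
    · exact h
    · exact absurd (hQ0 v0 h.symm) hv0ne
  set lam : ℝ := Q v0 with hlam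
  -- lower bound for Q in terms of the sup norm
  have hQsmul : ∀ (c : ℝ) (v : ι → ℝ), Q (c • v) = c * (c * Q v) := by
    intro c v
    rw [hQdef]
    simp only [Matrix.mulVec_smul, dotProduct_smul, smul_dotProduct,
      smul_eq_mul]
  have hlow : ∀ v : ι → ℝ, lam * ‖v‖ ^ 2 ≤ Q v := by
    intro v
    by_cases hv : v = 0
    · subst hv; simp [hQdef]
    · have hc : (0:ℝ) < ‖v‖ := norm_pos_iff.mpr hv
      set u : ι → ℝ := ‖v‖⁻¹ • v with hu
      have huS : u ∈ Metric.sphere (0 : ι → ℝ) 1 := by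
        rw [mem_sphere_zero_iff_norm, hu, norm_smul]
        simp [abs_of_pos (inv_pos.mpr hc), inv_mul_cancel₀ hc.ne']
      have hQu : lam ≤ Q u := isMinOn_iff.mp hvmin u huS
      have hveq : v = ‖v‖ • u := by
        rw [hu, smul_smul, mul_inv_cancel₀ hc.ne', one_smul]
      have hQv : Q v = ‖v‖ * (‖v‖ * Q u) := by
        conv_lhs => rw [hveq]
        exact hQsmul _ _
      rw [hQv]; nlinarith
  -- compare dot product with sup norm
  have hdotle : ∀ v : ι → ℝ, v ⬝ᵥ v ≤ (Fintype.card ι : ℝ) * ‖v‖ ^ 2 := by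
    intro v
    have : ∀ p : ι, v p * v p ≤ ‖v‖ ^ 2 := by
      intro p
      have h1 : |v p| ≤ ‖v‖ := by simpa [Real.norm_eq_abs] using norm_le_pi_norm v p
      calc v p * v p = |v p| * |v p| := (abs_mul_abs_self (v p)).symm
        _ ≤ ‖v‖ * ‖v‖ := mul_le_mul h1 h1 (abs_nonneg _) (norm_nonneg _)
        _ = ‖v‖ ^ 2 := (sq ‖v‖).symm
    calc v ⬝ᵥ v = ∑ p, v p * v p := rfl
      _ ≤ ∑ _p : ι, ‖v‖ ^ 2 := Finset.sum_le_sum fun p _ => this p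
      _ = (Fintype.card ι : ℝ) * ‖v‖ ^ 2 := by
          simp [Finset.sum_const, Finset.card_univ, nsmul_eq_mul]
  have hcard : (0:ℝ) < (Fintype.card ι : ℝ) := by
    have := Fintype.card_pos (α := ι)
    exact_mod_cast this
  set mu : ℝ := lam / (Fintype.card ι : ℝ) with hmu
  have hmupos : 0 < mu := div_pos hlampos hcard
  have hQdot : ∀ v : ι → ℝ, mu * (v ⬝ᵥ v) ≤ Q v := by
    intro v
    calc mu * (v ⬝ᵥ v) ≤ mu * ((Fintype.card ι : ℝ) * ‖v‖ ^ 2) := by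
          have := hdotle v
          have hnn : 0 ≤ v ⬝ᵥ v := Finset.sum_nonneg fun p _ => mul_self_nonneg _
          nlinarith
      _ = lam * ‖v‖ ^ 2 := by
          rw [hmu]; field_simp
      _ ≤ Q v := hlow v
  -- the energy function
  set g : ℝ → ℝ := fun t => (x t) ⬝ᵥ (x t) with hg
  have hgnn : ∀ t, 0 ≤ g t := fun t => Finset.sum_nonneg fun p _ => mul_self_nonneg _
  have hxi : ∀ (t : ℝ) (p : ι), HasDerivAt (fun t => x t p) ((-(L *ᵥ x t)) p) t :=
    fun t => hasDerivAt_pi.mp (hx t)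
  have hgd : ∀ t, HasDerivAt g (-2 * Q (x t)) t := by
    intro t
    have h1 : HasDerivAt (fun t => ∑ p, x t p * x t p)
        (∑ p, ((-(L *ᵥ x t)) p * x t p + x t p * (-(L *ᵥ x t)) p)) t :=
      HasDerivAt.fun_sum fun p _ => (hxi t p).mul (hxi t p)
    have h2 : (∑ p, ((-(L *ᵥ x t)) p * x t p + x t p * (-(L *ᵥ x t)) p))
        = -2 * Q (x t) := by
      rw [hQdef]
      show _ = -2 * ∑ p, x t p * (L *ᵥ x t) p
      rw [Finset.mul_sum]
      refine Finset.sum_congr rfl fun p _ => ?_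
      simp only [Pi.neg_apply]
      ring
    rw [h2] at h1
    exact h1
  -- the Lyapunov function
  set h : ℝ → ℝ := fun t => Real.exp (2 * mu * t) * g t with hh
  have hhd : ∀ t, HasDerivAt h
      (Real.exp (2 * mu * t) * (2 * mu * 1) * g t
        + Real.exp (2 * mu * t) * (-2 * Q (x t))) t := by
    intro t
    exact (((hasDerivAt_id t).const_mul (2 * mu)).exp).mul (hgd t)
  have hanti : Antitone h := by
    refine antitone_of_deriv_nonpos (fun t => (hhd t).differentiableAt) ?_
    intro t
    rw [(hhd t).deriv]
    have h1 : mu * g t ≤ Q (x t) := hQdot (x t)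
    have h2 : (0:ℝ) < Real.exp (2 * mu * t) := Real.exp_pos _
    nlinarith
  have hgbd : ∀ t : ℝ, 0 ≤ t → g t ≤ Real.exp (-(2 * mu * t)) * g 0 := by
    intro t ht
    have h1 : h t ≤ h 0 := hanti ht
    rw [hh] at h1
    simp only [mul_zero, Real.exp_zero, one_mul] at h1
    have h2 : (0:ℝ) < Real.exp (2 * mu * t) := Real.exp_pos _
    rw [Real.exp_neg]
    calc g t = (Real.exp (2 * mu * t))⁻¹ * (Real.exp (2 * mu * t) * g t) := by
          field_simp
      _ ≤ (Real.exp (2 * mu * t))⁻¹ * g 0 := by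
          apply mul_le_mul_of_nonneg_left h1 (le_of_lt (inv_pos.mpr h2))
  have hexptend : Tendsto (fun t : ℝ => Real.exp (-(2 * mu * t)) * g 0) atTop (nhds 0) := by
    have h1 : Tendsto (fun t : ℝ => 2 * mu * t) atTop atTop :=
      Tendsto.const_mul_atTop (by linarith) tendsto_id
    have h2 : Tendsto (fun t : ℝ => Real.exp (-(2 * mu * t))) atTop (nhds 0) :=
      Real.tendsto_exp_neg_atTop_nhds_zero.comp h1
    simpa using h2.mul_const (g 0)
  have hgt : Tendsto g atTop (nhds 0) := by
    apply squeeze_zero' (Filter.Eventually.of_forall hgnn)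
      ((eventually_ge_atTop (0:ℝ)).mono fun t ht => hgbd t ht) hexptend
  -- conclude
  rw [tendsto_pi_nhds]
  intro p
  have hsq : ∀ t, (x t p) ^ 2 ≤ g t := by
    intro t
    have := Finset.single_le_sum (f := fun q => x t q * x t q)
      (fun q _ => mul_self_nonneg _) (Finset.mem_univ p)
    calc (x t p) ^ 2 = x t p * x t p := sq (x t p)
      _ ≤ g t := this
  have habs : ∀ t, |x t p| ≤ Real.sqrt (g t) := fun t => Real.abs_le_sqrt (hsq t)
  have hsqrt : Tendsto (fun t => Real.sqrt (g t)) atTop (nhds 0) := by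
    have := (Real.continuous_sqrt.tendsto 0).comp hgt
    simpa using (by exact this : Tendsto (fun t => Real.sqrt (g t)) atTop (nhds (Real.sqrt 0)))
  have : Tendsto (fun t => |x t p|) atTop (nhds 0) :=
    squeeze_zero' (Filter.Eventually.of_forall fun t => abs_nonneg _)
      (Filter.Eventually.of_forall habs) hsqrt
  have hneg : Tendsto (fun t => -Real.sqrt (g t)) atTop (nhds 0) := by
    simpa using hsqrt.neg
  have h0 : Tendsto (fun t => x t p) atTop (nhds 0) :=
    tendsto_of_tendsto_of_tendsto_of_le_of_le hneg hsqrt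
      (fun t => (abs_le.mp (habs t)).1) (fun t => (abs_le.mp (habs t)).2)
  simpa using h0

/-- Let `G` have a positive-negative spanning tree `T` and suppose every
bipartition `(V₁,V₂)` of the nodes has a balancing set whose weight matrices have
trivially intersecting null spaces (no non-trivial balancing set exists).  Then the
null space of the matrix-valued Laplacian `L` is trivial, `null(L) = {0}`, and the
dynamics `ẋ = −L x` converges to the origin for every initial condition. -/
theorem no_nbs_implies_trivial_consensus {n d : ℕ}
    (E : Fin n → Fin n → Prop)
    (hEsymm : ∀ i j, E i j → E j i) (hEirr : ∀ i, ¬ E i i)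
    (A : Fin n → Fin n → Matrix (Fin d) (Fin d) ℝ)
    (hAsymm : ∀ i j, A i j = A j i)
    (hA0 : ∀ i j, ¬ E i j → A i j = 0)
    (s : Fin n → Fin n → ℝ) (hssymm : ∀ i j, s i j = s j i)
    (hs : ∀ i j, E i j →
      (s i j = 1 ∧ (A i j).PosSemidef) ∨ (s i j = -1 ∧ (-(A i j)).PosSemidef))
    -- the positive-negative spanning tree
    (T : Fin n → Fin n → Prop)
    (hTsymm : ∀ i j, T i j → T j i) (hTE : ∀ i j, T i j → E i j)
    (hTdef : ∀ i j, T i j → (A i j).PosDef ∨ (-(A i j)).PosDef)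
    (hTconn : ∀ p q : Fin n, Relation.ReflTransGen T p q)
    (L : Matrix (Fin n × Fin d) (Fin n × Fin d) ℝ)
    (hL : L = Matrix.of fun p q =>
      if p.1 = q.1 then (∑ k, s p.1 k • A p.1 k) p.2 q.2 else -(A p.1 q.1 p.2 q.2))
    -- no non-trivial balancing set: for every bipartition, the weight matrices of its
    -- balancing set have trivially intersecting null spaces
    (hnoNBS : ∀ P : Fin n → Bool, ∀ ξ : Fin d → ℝ,
      (∀ l m, E l m →
        ((P l = P m ∧ (-(A l m)).PosSemidef) ∨ (P l ≠ P m ∧ (A l m).PosSemidef)) →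
        (A l m).mulVec ξ = 0) → ξ = 0) :
    (∀ x : Fin n × Fin d → ℝ, L.mulVec x = 0 → x = 0) ∧
    (∀ x : ℝ → (Fin n × Fin d → ℝ),
      (∀ t : ℝ, HasDerivAt x (-(L.mulVec (x t))) t) →
      Filter.Tendsto x Filter.atTop (nhds 0)) := by
  rcases Nat.eq_zero_or_pos n with hn | hn
  · subst hn
    constructor
    · intro x _
      funext p
      exact p.1.elim0
    · intro x _
      have hx0 : x = fun _ => 0 := funext fun t => funext fun p => p.1.elim0
      rw [hx0]
      exact tendsto_const_nhds
  · have hQnn : ∀ v : Fin n × Fin d → ℝ, 0 ≤ dotProduct v (L.mulVec v) :=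
      aux_nonneg E hEsymm hEirr A hAsymm hA0 s hssymm hs L hL
    have hQ0 : ∀ v : Fin n × Fin d → ℝ, dotProduct v (L.mulVec v) = 0 → v = 0 :=
      aux_core hn E hEsymm hEirr A hAsymm hA0 s hssymm hs T hTsymm hTE hTdef hTconn L hL hnoNBS
    constructor
    · intro x hx
      exact hQ0 x (by rw [hx, dotProduct_zero])
    · intro x hx
      rcases Nat.eq_zero_or_pos d with hd | hd
      · subst hd
        have hx0 : x = fun _ => 0 := funext fun t => funext fun p => p.2.elim0
        rw [hx0]
        exact tendsto_const_nhds
      · haveI : Nonempty (Fin n × Fin d) := ⟨(⟨0, hn⟩, ⟨0, hd⟩)⟩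
        exact aux_tendsto L hQnn hQ0 x hx
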